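/- Let Γ be a group, G a topological group, P a closed subgroup of G, and K a compact subgroup of G such that every conjugate of P is of the form kPk⁻¹ for some k ∈ K. Let Λ ⊆ Γ be a subgroup, and let (ρ_i) be a sequence of homomorphisms Γ → G converging pointwise to a homomorphism ρ, such that for each i there exists k_i ∈ K with ρ_i(Λ) ⊆ k_i P k_i⁻¹. Then there exists k ∈ K with ρ(Λ) ⊆ kPk⁻¹; in other words, the set of homomorphisms sending Λ into some conjugate (by K) of P is closed under pointwise convergence. -/

import Mathlib

open Filter Topology

private lemma mapClusterPt_prod_of_tendsto {ι X Y : Type*} [TopologicalSpace X]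
    [TopologicalSpace Y] {F : Filter ι} {u : ι → X} {v : ι → Y} {x : X} {y : Y}
    (hu : MapClusterPt x F u) (hv : Tendsto v F (𝓝 y)) :
    MapClusterPt (x, y) F (fun i => (u i, v i)) := by
  rw [mapClusterPt_iff_frequently] at hu
  rw [mapClusterPt_iff_frequently]
  intro s hs
  rw [nhds_prod_eq] at hs
  obtain ⟨A, hA, B, hB, hAB⟩ := Filter.mem_prod_iff.1 hs
  have h1 : ∃ᶠ i in F, u i ∈ A := hu A hA
  have h2 : ∀ᶠ i in F, v i ∈ B := hv hB
  exact (h1.and_eventually h2).mono fun i hi => hAB ⟨hi.1, hi.2⟩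

/-- Let `Γ` be a group, `G` a Hausdorff topological group, `P` a closed subgroup and `K` a
compact subgroup such that every conjugate of `P` is of the form `kPk⁻¹` for some `k ∈ K`.
If a sequence of homomorphisms `ρᵢ : Γ →* G` converges pointwise to `ρ`, and each `ρᵢ` sends
the subgroup `Λ ≤ Γ` into some `K`-conjugate of `P`, then `ρ` sends `Λ` into some
`K`-conjugate of `P`.  (Abstracting Lemma 5.2: `G = SO(n,1)`, `P` minimal parabolic,
`K = SO(n)`.) -/
theorem limit_sends_subgroup_into_conjugate_of_closed_subgroup
    {Γ G : Type*} [Group Γ] [Group G] [TopologicalSpace G] [IsTopologicalGroup G] [T2Space G]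
    (P K : Subgroup G) (hP : IsClosed (P : Set G)) (hK : IsCompact (K : Set G))
    (hconj : ∀ g : G, ∃ k ∈ K,
      P.map (MulAut.conj g).toMonoidHom = P.map (MulAut.conj k).toMonoidHom)
    (Λ : Subgroup Γ) (ρ : ℕ → Γ →* G) (ρlim : Γ →* G)
    (hconv : ∀ γ : Γ, Filter.Tendsto (fun i => ρ i γ) Filter.atTop (nhds (ρlim γ)))
    (hin : ∀ i : ℕ, ∃ k ∈ K, ∀ γ ∈ Λ, ρ i γ ∈ P.map (MulAut.conj k).toMonoidHom) :
    ∃ k ∈ K, ∀ γ ∈ Λ, ρlim γ ∈ P.map (MulAut.conj k).toMonoidHom := by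
  choose k hkK hk using hin
  -- a cluster point of the sequence of conjugators
  obtain ⟨k₀, hk₀K, hk₀⟩ : ∃ k₀ ∈ K, ClusterPt k₀ (Filter.map k Filter.atTop) :=
    hK.exists_clusterPt (Filter.le_principal_iff.mpr
      (Filter.mem_map.mpr (Filter.Eventually.of_forall hkK)))
  refine ⟨k₀, hk₀K, fun γ hγ => ?_⟩
  -- the conjugated sequence lies in P
  have hmem : ∀ i, (k i)⁻¹ * ρ i γ * k i ∈ P := by
    intro i
    obtain ⟨p, hp, hpe⟩ := hk i γ hγ
    simp only [MulEquiv.coe_toMonoidHom, MulAut.conj_apply] at hpe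
    have : (k i)⁻¹ * ρ i γ * k i = p := by rw [← hpe]; group
    rwa [this]
  -- the conjugated limit is a cluster point of this sequence
  have hcl : MapClusterPt (k₀, ρlim γ) Filter.atTop (fun i => (k i, ρ i γ)) :=
    mapClusterPt_prod_of_tendsto hk₀ (hconv γ)
  have hcont : ContinuousAt (fun p : G × G => p.1⁻¹ * p.2 * p.1) (k₀, ρlim γ) := by
    fun_prop
  have hcl2 : MapClusterPt (k₀⁻¹ * ρlim γ * k₀) Filter.atTop
      (fun i => (k i)⁻¹ * ρ i γ * k i) :=
    hcl.continuousAt_comp hcont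
  have hinP : k₀⁻¹ * ρlim γ * k₀ ∈ P := by
    have : ClusterPt (k₀⁻¹ * ρlim γ * k₀) (Filter.principal (P : Set G)) :=
      hcl2.clusterPt.mono (Filter.le_principal_iff.mpr
        (Filter.mem_map.mpr (Filter.Eventually.of_forall hmem)))
    have := mem_closure_iff_clusterPt.mpr this
    rwa [hP.closure_eq] at this
  exact ⟨k₀⁻¹ * ρlim γ * k₀, hinP, by
    simp only [MulEquiv.coe_toMonoidHom, MulAut.conj_apply]; group⟩
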